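/- For every u > 0 and every real θ with −μu < θ and θ < Φ(u + θ/μ), ∫_0^∞ u e^{−ux} E(e^{θ(T̃_x − x/μ)} − 1) dx = (θ/(μu + θ)) · [ μu/(Φ(u + θ/μ) − θ) − 1 ]. -/

import Mathlib

open MeasureTheory ProbabilityTheory Filter Set Topology
open scoped ENNReal

noncomputable section

lemma exp_int_Ioi (r : ℝ) {a : ℝ} (ha : 0 < a) :
    ∫ x in Set.Ioi r, Real.exp (-(a * x)) = Real.exp (-(a * r)) / a := by
  have hd : ∀ x ∈ Set.Ioi r, HasDerivAt (fun y => -Real.exp (-(a * y)) / a)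
      (Real.exp (-(a * x))) x := by
    intro x _
    have h1 : HasDerivAt (fun y : ℝ => -(a * y)) (-a) x := by
      exact ((by simpa using (hasDerivAt_id x).const_mul a : HasDerivAt (fun y : ℝ => a * y) a x)).neg
    have h2 := (h1.exp.neg).div_const a
    refine h2.congr_deriv ?_
    rw [mul_neg, neg_neg, mul_div_assoc, div_self ha.ne', mul_one]
  have hint : IntegrableOn (fun x => Real.exp (-(a * x))) (Set.Ioi r) := by
    simpa [neg_mul] using exp_neg_integrableOn_Ioi r ha
  have htend : Tendsto (fun y => -Real.exp (-(a * y)) / a) atTop (𝓝 0) := by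
    have h1 : Tendsto (fun y : ℝ => -(a * y)) atTop atBot := by
      simpa [neg_mul] using (tendsto_id (α := ℝ)).const_mul_atTop_of_neg (neg_neg_iff_pos.2 ha)
    have := (Real.tendsto_exp_atBot.comp h1).neg.div_const a
    simpa using this
  have hcont : ContinuousWithinAt (fun y => -Real.exp (-(a * y)) / a) (Set.Ici r) r :=
    (Continuous.continuousWithinAt (by continuity))
  have := integral_Ioi_of_hasDerivAt_of_tendsto hcont hd hint htend
  rw [this]
  field_simp
  ring

lemma exp_lint_Ioi (r : ℝ) {a : ℝ} (ha : 0 < a) :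
    ∫⁻ x in Set.Ioi r, ENNReal.ofReal (Real.exp (-(a * x)))
      = ENNReal.ofReal (Real.exp (-(a * r)) / a) := by
  have hint : IntegrableOn (fun x => Real.exp (-(a * x))) (Set.Ioi r) := by
    simpa [neg_mul] using exp_neg_integrableOn_Ioi r ha
  rw [← exp_int_Ioi r ha, ← ofReal_integral_eq_lintegral_ofReal hint
    (ae_of_all _ fun x => (Real.exp_pos _).le)]

lemma exp_int_Ioo {θ T : ℝ} (hθ : θ ≠ 0) (hT : 0 ≤ T) :
    ∫ t in Set.Ioo 0 T, Real.exp (θ * t) = (Real.exp (θ * T) - 1) / θ := by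
  rw [← MeasureTheory.integral_Ioc_eq_integral_Ioo, ← intervalIntegral.integral_of_le hT]
  have hd : ∀ t ∈ Set.uIcc (0:ℝ) T, HasDerivAt (fun y => Real.exp (θ * y) / θ)
      (Real.exp (θ * t)) t := by
    intro t _
    have h1 : HasDerivAt (fun y : ℝ => θ * y) θ t := by simpa using (hasDerivAt_id t).const_mul θ
    have h2 := h1.exp.div_const θ
    refine h2.congr_deriv ?_
    rw [mul_div_assoc, div_self hθ, mul_one]
  have hii : IntervalIntegrable (fun t => Real.exp (θ * t)) volume 0 T :=
    (Real.continuous_exp.comp (continuous_const.mul continuous_id)).intervalIntegrable 0 T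
  have := intervalIntegral.integral_eq_sub_of_hasDerivAt hd hii
  rw [this]
  field_simp
  simp

/-- The setup of the paper: a driftless Lévy subordinator `Xp` with Lévy measure `ν`
(finite mean `μ`), an independent initial delay `X0` with the stationary delay
distribution, and the associated inverse subordinators. -/
structure LevyCtx (Ω : Type) [MeasureSpace Ω] where
  ν : Measure ℝ
  μ : ℝ
  Xp : ℝ → Ω → ℝ
  X0 : Ω → ℝ
  prob : IsProbabilityMeasure (ℙ : Measure Ω)
  nu_supp : ν (Set.Iic 0) = 0
  nu_min_fin : (∫⁻ x, ENNReal.ofReal (min 1 x) ∂ν) ≠ ⊤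
  mu_pos : 0 < μ
  mu_eq : ∫⁻ x, ENNReal.ofReal x ∂ν = ENNReal.ofReal μ
  Xp_meas : ∀ t, Measurable (Xp t)
  X0_meas : Measurable X0
  Xp_zero : ∀ ω, Xp 0 ω = 0
  Xp_mono : ∀ᵐ ω : Ω, Monotone fun t => Xp t ω
  Xp_rc : ∀ᵐ ω : Ω, ∀ t : ℝ, ContinuousWithinAt (fun s => Xp s ω) (Set.Ici t) t
  Xp_top : ∀ᵐ ω : Ω, Tendsto (fun t => Xp t ω) atTop atTop
  Xp_laplace : ∀ u : ℝ, 0 ≤ u → ∀ t : ℝ, 0 ≤ t →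
    (∫ ω, Real.exp (-(u * Xp t ω))) = Real.exp (-(t * ∫ x, (1 - Real.exp (-(u * x))) ∂ν))
  Xp_stat : ∀ s t : ℝ, 0 ≤ s → s ≤ t →
    Measure.map (fun ω => Xp t ω - Xp s ω) ℙ = Measure.map (Xp (t - s)) ℙ
  Xp_indep : ∀ (n : ℕ) (t : Fin (n + 1) → ℝ), Monotone t → (∀ i, 0 ≤ t i) →
    iIndepFun
      (fun (i : Fin n) (ω : Ω) => Xp (t i.succ) ω - Xp (t i.castSucc) ω) ℙ
  X0_pos : ∀ᵐ ω : Ω, 0 < X0 ω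
  X0_cdf : ∀ x : ℝ, 0 ≤ x →
    (ℙ {ω | X0 ω ≤ x}).toReal = (1 / μ) * ∫ y in (0:ℝ)..x, (ν (Set.Ioi y)).toReal
  X0_indep : IndepFun X0 (fun ω (t : ℝ) => Xp t ω) ℙ

namespace LevyCtx

variable {Ω : Type} [MeasureSpace Ω] (S : LevyCtx Ω)

/-- The Laplace exponent `Φ(u) = ∫ (1 - e^{-ux}) ν(dx)`. -/
def Phi (u : ℝ) : ℝ := ∫ x, (1 - Real.exp (-(u * x))) ∂S.ν

/-- The inverse (first passage) process of the delayed subordinator `X = X0 + Xp`. -/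
def T (x : ℝ) (ω : Ω) : ℝ := sInf {t : ℝ | 0 ≤ t ∧ x < S.X0 ω + S.Xp t ω}

/-- The inverse (first passage) process of the pure subordinator `Xp`. -/
def Tp (x : ℝ) (ω : Ω) : ℝ := sInf {t : ℝ | 0 ≤ t ∧ x < S.Xp t ω}

/-- The overshoot process `Γ_x = X_{T_x} - x`. -/
def Gshoot (x : ℝ) (ω : Ω) : ℝ := S.X0 ω + S.Xp (S.T x ω) ω - x

end LevyCtx

set_option maxHeartbeats 2000000 in
/-- Double transform of the centered first passage time of the pure subordinator. -/
theorem double_transform_Tp_centered {Ω : Type} [MeasureSpace Ω] (S : LevyCtx Ω)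
    (u θ : ℝ) (hu : 0 < u) (hθl : -(S.μ * u) < θ) (hθu : θ < S.Phi (u + θ / S.μ)) :
    (∫ x in Set.Ioi (0:ℝ), u * Real.exp (-(u * x)) *
        ∫ ω, (Real.exp (θ * (S.Tp x ω - x / S.μ)) - 1))
      = (θ / (S.μ * u + θ)) * (S.μ * u / (S.Phi (u + θ / S.μ) - θ) - 1) := by
  classical
  haveI : IsProbabilityMeasure (ℙ : Measure Ω) := S.prob
  rcases eq_or_ne θ 0 with rfl | hθ0
  · simp
  have hμ : 0 < S.μ := S.mu_pos
  set v : ℝ := u + θ / S.μ with hv_def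
  have hv : 0 < v := by
    have h1 : -u < θ / S.μ := by
      rw [lt_div_iff₀ hμ]; nlinarith
    simp only [hv_def]; linarith
  set c : ℝ := S.Phi v with hc_def
  have hcθ : θ < c := hθu
  have hcθ' : (0:ℝ) < c - θ := sub_pos.mpr hcθ
  -- the good event
  have hgood : ∀ᵐ ω : Ω, (Monotone fun t => S.Xp t ω) ∧
      (∀ t : ℝ, ContinuousWithinAt (fun s => S.Xp s ω) (Set.Ici t) t) ∧
      Tendsto (fun t => S.Xp t ω) atTop atTop := S.Xp_mono.and (S.Xp_rc.and S.Xp_top)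
  -- basic pointwise facts
  have hXnn : ∀ ω : Ω, (Monotone fun t => S.Xp t ω) → ∀ t : ℝ, 0 ≤ t → 0 ≤ S.Xp t ω := by
    intro ω hm t ht
    have := hm ht
    simpa [S.Xp_zero ω] using this
  have hTp_nonneg : ∀ (x : ℝ) (ω : Ω), 0 ≤ S.Tp x ω := by
    intro x ω
    exact Real.sInf_nonneg (fun s hs => hs.1)
  have hTp_lt : ∀ ω : Ω, (Monotone fun t => S.Xp t ω) →
      Tendsto (fun t => S.Xp t ω) atTop atTop → ∀ x t : ℝ, 0 ≤ t →
      (t < S.Tp x ω ↔ ∃ q : ℚ, t < (q : ℝ) ∧ S.Xp q ω ≤ x) := by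
    intro ω hm htop x t ht
    simp only [LevyCtx.Tp]
    have hne : {s : ℝ | 0 ≤ s ∧ x < S.Xp s ω}.Nonempty := by
      obtain ⟨s, hs1, hs2⟩ := ((htop.eventually_gt_atTop x).and (eventually_ge_atTop (0:ℝ))).exists
      exact ⟨s, hs2, hs1⟩
    have hbdd : BddBelow {s : ℝ | 0 ≤ s ∧ x < S.Xp s ω} := ⟨0, fun s hs => hs.1⟩
    constructor
    · intro hlt
      obtain ⟨q, hq1, hq2⟩ := exists_rat_btwn hlt
      refine ⟨q, hq1, ?_⟩
      by_contra hcon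
      push_neg at hcon
      exact absurd (csInf_le hbdd ⟨le_trans ht hq1.le, hcon⟩) (not_le.mpr hq2)
    · rintro ⟨q, hq1, hq2⟩
      refine lt_of_lt_of_le hq1 (le_csInf hne ?_)
      rintro s ⟨hs0, hsx⟩
      by_contra hcon
      push_neg at hcon
      exact absurd (le_trans (hm hcon.le) hq2) (not_le.mpr hsx)
  -- right-continuity consequence
  have hsec1 : ∀ ω : Ω, (∀ t : ℝ, ContinuousWithinAt (fun s => S.Xp s ω) (Set.Ici t) t) →
      ∀ t x : ℝ, S.Xp t ω < x → ∃ q : ℚ, t < (q:ℝ) ∧ S.Xp q ω ≤ x := by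
    intro ω hrc t x hlt
    have hev : (fun s => S.Xp s ω) ⁻¹' Set.Iio x ∈ 𝓝[Set.Ici t] t := (hrc t) (Iio_mem_nhds hlt)
    rw [Metric.mem_nhdsWithin_iff] at hev
    obtain ⟨ε, hε, hsub⟩ := hev
    obtain ⟨q, hq1, hq2⟩ := exists_rat_btwn (lt_add_of_pos_right t hε)
    refine ⟨q, hq1, le_of_lt ?_⟩
    have hmem : (q:ℝ) ∈ Metric.ball t ε ∩ Set.Ici t := by
      constructor
      · rw [Metric.mem_ball, Real.dist_eq, abs_lt]
        constructor <;> linarith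
      · exact le_of_lt hq1
    exact hsub hmem
  have hsec2 : ∀ ω : Ω, (Monotone fun t => S.Xp t ω) → ∀ t x : ℝ,
      (∃ q : ℚ, t < (q:ℝ) ∧ S.Xp q ω ≤ x) → S.Xp t ω ≤ x := by
    rintro ω hm t x ⟨q, hq1, hq2⟩
    exact le_trans (hm hq1.le) hq2
  -- measurable sets
  set B : ℝ → Set (ℝ × Ω) := fun x => {p | ∃ q : ℚ, p.1 < (q:ℝ) ∧ S.Xp q p.2 ≤ x} with hB_def
  have hBmeas : ∀ x, MeasurableSet (B x) := by
    intro x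
    have heq : B x = ⋃ q : ℚ, ({t : ℝ | t < (q:ℝ)} ×ˢ {ω | S.Xp q ω ≤ x}) := by
      ext p
      simp [hB_def, Set.mem_prod]
    rw [heq]
    refine MeasurableSet.iUnion fun q => MeasurableSet.prod measurableSet_Iio ?_
    exact (S.Xp_meas q) measurableSet_Iic
  set C : ℝ → Set (ℝ × Ω) := fun t => {p | ∃ q : ℚ, t < (q:ℝ) ∧ S.Xp q p.2 ≤ p.1} with hC_def
  have hCmeas : ∀ t, MeasurableSet (C t) := by
    intro t
    have heq : C t = ⋃ q : ℚ, ({p : ℝ × Ω | t < (q:ℝ)} ∩ {p : ℝ × Ω | S.Xp q p.2 ≤ p.1}) := by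
      ext p; simp [hC_def]
    rw [heq]
    refine MeasurableSet.iUnion fun q => (MeasurableSet.const _).inter ?_
    exact measurableSet_le ((S.Xp_meas q).comp measurable_snd) measurable_fst
  set D : Set ((ℝ × ℝ) × Ω) := {p | ∃ q : ℚ, p.1.2 < (q:ℝ) ∧ S.Xp q p.2 ≤ p.1.1} with hD_def
  have hDmeas : MeasurableSet D := by
    have heq : D = ⋃ q : ℚ, ({p : (ℝ × ℝ) × Ω | p.1.2 < (q:ℝ)}
        ∩ {p : (ℝ × ℝ) × Ω | S.Xp q p.2 ≤ p.1.1}) := by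
      ext p; simp [hD_def]
    rw [heq]
    refine MeasurableSet.iUnion fun q => MeasurableSet.inter ?_ ?_
    · exact measurableSet_lt measurable_fst.snd measurable_const
    · exact measurableSet_le ((S.Xp_meas q).comp measurable_snd) measurable_fst.fst
  set ψ : ℝ → ℝ → ℝ≥0∞ := fun x t => ℙ {ω | ∃ q : ℚ, t < (q:ℝ) ∧ S.Xp q ω ≤ x} with hψ_def
  have hψ_meas : Measurable (fun z : ℝ × ℝ => ψ z.1 z.2) := by
    have h := measurable_measure_prodMk_left (ν := (ℙ : Measure Ω)) hDmeas
    convert h using 2 with z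
    rfl
  have hAmeas : ∀ x t : ℝ, MeasurableSet {ω | ∃ q : ℚ, t < (q:ℝ) ∧ S.Xp q ω ≤ x} := by
    intro x t
    exact measurable_prodMk_left (hBmeas x)
  -- Laplace transform of Xp t, in lintegral form
  have hLap : ∀ t : ℝ, 0 ≤ t → ∫⁻ ω, ENNReal.ofReal (Real.exp (-(v * S.Xp t ω)))
      = ENNReal.ofReal (Real.exp (-(t * c))) := by
    intro t ht
    have hm : Measurable fun ω => Real.exp (-(v * S.Xp t ω)) :=
      Real.measurable_exp.comp ((S.Xp_meas t).const_mul v).neg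
    have hb : ∀ᵐ ω : Ω, ‖Real.exp (-(v * S.Xp t ω))‖ ≤ 1 := by
      filter_upwards [hgood] with ω hg
      rw [Real.norm_eq_abs, abs_of_pos (Real.exp_pos _), Real.exp_le_one_iff]
      have := hXnn ω hg.1 t ht
      nlinarith
    have hint : Integrable (fun ω => Real.exp (-(v * S.Xp t ω))) ℙ :=
      (integrable_const (1:ℝ)).mono' hm.aestronglyMeasurable hb
    rw [← ofReal_integral_eq_lintegral_ofReal hint (ae_of_all _ fun ω => (Real.exp_pos _).le)]
    rw [S.Xp_laplace v hv.le t ht]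
    rfl
  -- Markov bound
  have hψ_le : ∀ x t : ℝ, 0 ≤ t → ψ x t ≤
      ENNReal.ofReal (Real.exp (v * x)) * ENNReal.ofReal (Real.exp (-(t * c))) := by
    intro x t ht
    set s : Set Ω := {ω | ENNReal.ofReal (Real.exp (-(v * x)))
      ≤ ENNReal.ofReal (Real.exp (-(v * S.Xp t ω)))} with hs_def
    have h1 : ψ x t ≤ ℙ s := by
      refine measure_mono_ae ?_
      filter_upwards [hgood] with ω hg hmem
      have hle : S.Xp t ω ≤ x := hsec2 ω hg.1 t x hmem
      have h2 : -(v * x) ≤ -(v * S.Xp t ω) := by nlinarith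
      exact ENNReal.ofReal_le_ofReal (Real.exp_le_exp.mpr h2)
    have hm : Measurable fun ω => ENNReal.ofReal (Real.exp (-(v * S.Xp t ω))) :=
      (Real.measurable_exp.comp ((S.Xp_meas t).const_mul v).neg).ennreal_ofReal
    have h2 := mul_meas_ge_le_lintegral₀ (μ := (ℙ : Measure Ω)) hm.aemeasurable (ENNReal.ofReal (Real.exp (-(v * x))))
    rw [hLap t ht] at h2
    calc ψ x t ≤ ℙ s := h1
      _ = (ENNReal.ofReal (Real.exp (v * x)) * ENNReal.ofReal (Real.exp (-(v * x)))) * ℙ s := by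
          rw [← ENNReal.ofReal_mul (Real.exp_pos _).le, ← Real.exp_add]
          simp
      _ = ENNReal.ofReal (Real.exp (v * x))
          * (ENNReal.ofReal (Real.exp (-(v * x))) * ℙ s) := by ring
      _ ≤ ENNReal.ofReal (Real.exp (v * x)) * ENNReal.ofReal (Real.exp (-(t * c))) :=
          mul_le_mul_right h2 _
  -- the key auxiliary quantity
  set N : ℝ → ℝ≥0∞ := fun x => ∫⁻ t in Set.Ioi (0:ℝ),
    ENNReal.ofReal (Real.exp (θ * t)) * ψ x t with hN_def
  have hN_le : ∀ x, N x ≤ ENNReal.ofReal (Real.exp (v * x)) * ENNReal.ofReal (1/(c-θ)) := by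
    intro x
    have hmono : ∀ t ∈ Set.Ioi (0:ℝ), ENNReal.ofReal (Real.exp (θ * t)) * ψ x t ≤
        ENNReal.ofReal (Real.exp (v * x)) * ENNReal.ofReal (Real.exp (-((c - θ) * t))) := by
      intro t ht
      calc ENNReal.ofReal (Real.exp (θ * t)) * ψ x t
          ≤ ENNReal.ofReal (Real.exp (θ * t)) * (ENNReal.ofReal (Real.exp (v * x))
            * ENNReal.ofReal (Real.exp (-(t * c)))) :=
            mul_le_mul_right (hψ_le x t (le_of_lt ht)) _
        _ = ENNReal.ofReal (Real.exp (v * x))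
            * (ENNReal.ofReal (Real.exp (θ * t)) * ENNReal.ofReal (Real.exp (-(t * c)))) := by ring
        _ = ENNReal.ofReal (Real.exp (v * x)) * ENNReal.ofReal (Real.exp (-((c - θ) * t))) := by
            rw [← ENNReal.ofReal_mul (Real.exp_pos _).le, ← Real.exp_add]
            congr 2
            ring
    calc N x ≤ ∫⁻ t in Set.Ioi (0:ℝ), ENNReal.ofReal (Real.exp (v * x))
          * ENNReal.ofReal (Real.exp (-((c - θ) * t))) := by
          refine setLIntegral_mono ?_ hmono
          exact measurable_const.mul
            ((Real.measurable_exp.comp ((measurable_id.const_mul (c-θ)).neg)).ennreal_ofReal)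
      _ = ENNReal.ofReal (Real.exp (v * x))
          * ∫⁻ t in Set.Ioi (0:ℝ), ENNReal.ofReal (Real.exp (-((c - θ) * t))) :=
          lintegral_const_mul' _ _ ENNReal.ofReal_ne_top
      _ = ENNReal.ofReal (Real.exp (v * x)) * ENNReal.ofReal (1/(c-θ)) := by
          rw [exp_lint_Ioi 0 hcθ']
          norm_num
  have hN_fin : ∀ x, N x ≠ ⊤ := by
    intro x
    exact ((hN_le x).trans_lt (ENNReal.mul_lt_top ENNReal.ofReal_lt_top ENNReal.ofReal_lt_top)).ne
  have hN_meas : Measurable N := by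
    have h : Measurable fun p : ℝ × ℝ => ENNReal.ofReal (Real.exp (θ * p.2)) * ψ p.1 p.2 :=
      ((Real.measurable_exp.comp (measurable_snd.const_mul θ)).ennreal_ofReal).mul hψ_meas
    exact Measurable.lintegral_prod_right (f := fun x t => ENNReal.ofReal (Real.exp (θ * t)) * ψ x t) h
  -- inner expectation identity
  have hInner : ∀ x : ℝ,
      Integrable (fun ω => Real.exp (θ * (S.Tp x ω - x / S.μ)) - 1) (ℙ : Measure Ω) ∧
      (∫ ω, (Real.exp (θ * (S.Tp x ω - x / S.μ)) - 1))
        = Real.exp (-(θ * (x / S.μ))) * (θ * (N x).toReal)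
          + (Real.exp (-(θ * (x / S.μ))) - 1) := by
    intro x
    have hFm : Measurable fun p : Ω × ℝ => ENNReal.ofReal (Real.exp (θ * p.2))
        * Set.indicator (B x) (fun _ => (1:ℝ≥0∞)) (p.2, p.1) := by
      have h1 : Measurable fun p : Ω × ℝ => (p.2, p.1) := measurable_snd.prodMk measurable_fst
      exact ((Real.measurable_exp.comp (measurable_snd.const_mul θ)).ennreal_ofReal).mul
        ((measurable_const.indicator (hBmeas x)).comp h1)
    obtain ⟨g, hg_def⟩ : ∃ g : Ω → ℝ≥0∞, g = fun ω => ∫⁻ t in Set.Ioi (0:ℝ),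
      ENNReal.ofReal (Real.exp (θ * t)) * Set.indicator (B x) (fun _ => (1:ℝ≥0∞)) (t, ω) :=
      ⟨_, rfl⟩
    have hg_meas : Measurable g := by
      rw [hg_def]
      exact Measurable.lintegral_prod_right
        (f := fun ω t => ENNReal.ofReal (Real.exp (θ * t))
          * Set.indicator (B x) (fun _ => (1:ℝ≥0∞)) (t, ω)) hFm
    have hg_eq : ∀ᵐ ω : Ω, g ω = ENNReal.ofReal ((Real.exp (θ * S.Tp x ω) - 1) / θ) := by
      filter_upwards [hgood] with ω hg
      have hT0 : 0 ≤ S.Tp x ω := hTp_nonneg x ω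
      have hpt : ∀ t ∈ Set.Ioi (0:ℝ),
          ENNReal.ofReal (Real.exp (θ * t)) * Set.indicator (B x) (fun _ => (1:ℝ≥0∞)) (t, ω)
            = Set.indicator (Set.Iio (S.Tp x ω))
              (fun t => ENNReal.ofReal (Real.exp (θ * t))) t := by
        intro t ht
        by_cases hmem : (t, ω) ∈ B x
        · have h1 : t < S.Tp x ω := (hTp_lt ω hg.1 hg.2.2 x t (le_of_lt ht)).mpr hmem
          rw [Set.indicator_of_mem hmem, Set.indicator_of_mem (by exact h1)]
          simp
        · have h1 : ¬ t < S.Tp x ω := fun hcon =>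
            hmem ((hTp_lt ω hg.1 hg.2.2 x t (le_of_lt ht)).mp hcon)
          rw [Set.indicator_of_notMem hmem, Set.indicator_of_notMem (by exact h1)]
          simp
      rw [hg_def]
      simp only []
      rw [setLIntegral_congr_fun measurableSet_Ioi hpt]
      rw [lintegral_indicator measurableSet_Iio]
      rw [Measure.restrict_restrict measurableSet_Iio, Set.Iio_inter_Ioi]
      have hint : IntegrableOn (fun t => Real.exp (θ * t)) (Set.Ioo 0 (S.Tp x ω)) := by
        refine IntegrableOn.mono_set ?_ Set.Ioo_subset_Icc_self
        exact ContinuousOn.integrableOn_compact isCompact_Icc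
          (Continuous.continuousOn (by continuity))
      rw [← ofReal_integral_eq_lintegral_ofReal hint (ae_of_all _ fun t => (Real.exp_pos _).le)]
      rw [exp_int_Ioo hθ0 hT0]
    have hswap : ∫⁻ ω, g ω ∂ℙ = N x := by
      rw [hg_def]
      rw [lintegral_lintegral_swap hFm.aemeasurable]
      rw [hN_def]
      refine setLIntegral_congr_fun measurableSet_Ioi (fun t ht => ?_)
      have hsect : MeasurableSet {ω : Ω | (t, ω) ∈ B x} := measurable_prodMk_left (hBmeas x)
      have hpt : ∀ ω : Ω, ENNReal.ofReal (Real.exp (θ * t))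
          * Set.indicator (B x) (fun _ => (1:ℝ≥0∞)) (t, ω)
            = Set.indicator {ω : Ω | (t, ω) ∈ B x}
              (fun _ => ENNReal.ofReal (Real.exp (θ * t))) ω := by
        intro ω
        by_cases hmem : (t, ω) ∈ B x
        · rw [Set.indicator_of_mem hmem, Set.indicator_of_mem (by exact hmem)]; simp
        · rw [Set.indicator_of_notMem hmem, Set.indicator_of_notMem (by exact hmem)]; simp
      rw [lintegral_congr hpt, lintegral_indicator hsect, setLIntegral_const]
      rfl
    obtain ⟨h, hh_def⟩ : ∃ h : Ω → ℝ, h = fun ω => (Real.exp (θ * S.Tp x ω) - 1) / θ :=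
      ⟨_, rfl⟩
    have hh_nn : ∀ ω, 0 ≤ h ω := by
      intro ω
      rw [hh_def]
      have hT0 := hTp_nonneg x ω
      rcases lt_or_gt_of_ne hθ0 with hneg | hpos
      · refine div_nonneg_iff.mpr (Or.inr ⟨?_, ?_⟩)
        · have h1 : Real.exp (θ * S.Tp x ω) ≤ 1 := by
            rw [← Real.exp_zero]
            exact Real.exp_le_exp.mpr (by nlinarith)
          linarith
        · linarith
      · apply div_nonneg
        · have h1 : (1:ℝ) ≤ Real.exp (θ * S.Tp x ω) := by
            rw [← Real.exp_zero]
            exact Real.exp_le_exp.mpr (by nlinarith)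
          linarith
        · linarith
    have hg_toReal : (fun ω => (g ω).toReal) =ᵐ[(ℙ : Measure Ω)] h := by
      filter_upwards [hg_eq] with ω hω
      rw [hω, hh_def]
      exact ENNReal.toReal_ofReal (by
        have := hh_nn ω
        rwa [hh_def] at this)
    have hg_fin : ∫⁻ ω, g ω ∂ℙ ≠ ⊤ := by rw [hswap]; exact hN_fin x
    have hh_int : Integrable h (ℙ : Measure Ω) :=
      (integrable_toReal_of_lintegral_ne_top hg_meas.aemeasurable hg_fin).congr hg_toReal
    have hh_integral : ∫ ω, h ω = (N x).toReal := by
      rw [integral_eq_lintegral_of_nonneg_ae (ae_of_all _ hh_nn) hh_int.aestronglyMeasurable]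
      congr 1
      rw [← hswap]
      refine lintegral_congr_ae ?_
      filter_upwards [hg_eq] with ω hω
      rw [hω, hh_def]
    have hkey : ∀ ω : Ω, Real.exp (θ * S.Tp x ω) - 1 = θ * h ω := by
      intro ω
      rw [hh_def]
      field_simp
    have hsplit : (fun ω => Real.exp (θ * (S.Tp x ω - x / S.μ)) - 1)
        = fun ω => Real.exp (-(θ * (x / S.μ))) * (θ * h ω)
          + (Real.exp (-(θ * (x / S.μ))) - 1) := by
      funext ω
      rw [← hkey ω]
      have e1 : θ * (S.Tp x ω - x / S.μ) = θ * S.Tp x ω + (-(θ * (x / S.μ))) := by ring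
      rw [e1, Real.exp_add]
      ring
    have hint1 : Integrable (fun ω => Real.exp (θ * (S.Tp x ω - x / S.μ)) - 1)
        (ℙ : Measure Ω) := by
      rw [hsplit]
      exact ((hh_int.const_mul θ).const_mul _).add (integrable_const _)
    refine ⟨hint1, ?_⟩
    rw [hsplit]
    rw [integral_add ((hh_int.const_mul θ).const_mul _) (integrable_const _)]
    rw [integral_const]
    rw [integral_const_mul, integral_const_mul, hh_integral]
    simp
  -- x-section computation
  have hXint : ∀ t : ℝ, 0 ≤ t →
      ∫⁻ x in Set.Ioi (0:ℝ), ENNReal.ofReal (Real.exp (-(v * x))) * ψ x t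
        = ENNReal.ofReal (1/v) * ENNReal.ofReal (Real.exp (-(t * c))) := by
    intro t ht
    have hFm : Measurable fun p : ℝ × Ω => ENNReal.ofReal (Real.exp (-(v * p.1)))
        * Set.indicator (C t) (fun _ => (1:ℝ≥0∞)) p :=
      ((Real.measurable_exp.comp ((measurable_fst.const_mul v).neg)).ennreal_ofReal).mul
        (measurable_const.indicator (hCmeas t))
    have h0 : ∀ x : ℝ, ENNReal.ofReal (Real.exp (-(v * x))) * ψ x t
        = ∫⁻ ω, ENNReal.ofReal (Real.exp (-(v * x)))
          * Set.indicator (C t) (fun _ => (1:ℝ≥0∞)) (x, ω) ∂ℙ := by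
      intro x
      have hsect : MeasurableSet {ω : Ω | (x, ω) ∈ C t} := measurable_prodMk_left (hCmeas t)
      have hpt : ∀ ω : Ω, ENNReal.ofReal (Real.exp (-(v * x)))
          * Set.indicator (C t) (fun _ => (1:ℝ≥0∞)) (x, ω)
            = Set.indicator {ω : Ω | (x, ω) ∈ C t}
              (fun _ => ENNReal.ofReal (Real.exp (-(v * x)))) ω := by
        intro ω
        by_cases hmem : (x, ω) ∈ C t
        · rw [Set.indicator_of_mem hmem, Set.indicator_of_mem (by exact hmem)]; simp
        · rw [Set.indicator_of_notMem hmem, Set.indicator_of_notMem (by exact hmem)]; simp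
      rw [lintegral_congr hpt, lintegral_indicator hsect, setLIntegral_const]
      rfl
    rw [setLIntegral_congr_fun measurableSet_Ioi (fun x _ => h0 x)]
    rw [lintegral_lintegral_swap hFm.aemeasurable]
    have houter : ∀ᵐ ω ∂(ℙ : Measure Ω),
        (∫⁻ x in Set.Ioi (0:ℝ), ENNReal.ofReal (Real.exp (-(v * x)))
          * Set.indicator (C t) (fun _ => (1:ℝ≥0∞)) (x, ω))
          = ENNReal.ofReal (1/v) * ENNReal.ofReal (Real.exp (-(v * S.Xp t ω))) := by
      filter_upwards [hgood] with ω hg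
      have hXnn' : 0 ≤ S.Xp t ω := hXnn ω hg.1 t ht
      have hae : ∀ᵐ x ∂(volume : Measure ℝ), x ≠ S.Xp t ω := by
        refine ae_iff.mpr ?_
        have hset : {x : ℝ | ¬ x ≠ S.Xp t ω} = {S.Xp t ω} := by ext x; simp
        rw [hset, Real.volume_singleton]
      have hcong : ∀ᵐ x ∂(volume.restrict (Set.Ioi (0:ℝ))),
          ENNReal.ofReal (Real.exp (-(v * x))) * Set.indicator (C t) (fun _ => (1:ℝ≥0∞)) (x, ω)
            = Set.indicator (Set.Ioi (S.Xp t ω))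
              (fun x => ENNReal.ofReal (Real.exp (-(v * x)))) x := by
        refine ae_restrict_of_ae ?_
        filter_upwards [hae] with x hx
        by_cases hmem : (x, ω) ∈ C t
        · have h1 : S.Xp t ω ≤ x := hsec2 ω hg.1 t x hmem
          have h2 : S.Xp t ω < x := lt_of_le_of_ne h1 (Ne.symm hx)
          rw [Set.indicator_of_mem hmem, Set.indicator_of_mem (Set.mem_Ioi.mpr h2)]
          simp
        · have h1 : ¬ S.Xp t ω < x := fun hcon => hmem (hsec1 ω hg.2.1 t x hcon)
          rw [Set.indicator_of_notMem hmem, Set.indicator_of_notMem (by exact h1)]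
          simp
      rw [lintegral_congr_ae hcong]
      rw [lintegral_indicator measurableSet_Ioi, Measure.restrict_restrict measurableSet_Ioi,
        Set.Ioi_inter_Ioi, sup_eq_left.mpr hXnn']
      rw [exp_lint_Ioi _ hv]
      rw [← ENNReal.ofReal_mul (by positivity)]
      congr 1
      rw [div_eq_mul_inv, one_div, mul_comm]
    rw [lintegral_congr_ae houter, lintegral_const_mul' _ _ ENNReal.ofReal_ne_top, hLap t ht]
  -- the double transform of N
  have hL : ∫⁻ x in Set.Ioi (0:ℝ), ENNReal.ofReal (Real.exp (-(v * x))) * N x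
      = ENNReal.ofReal (1/v) * ENNReal.ofReal (1/(c-θ)) := by
    have hmeas2 : Measurable fun z : ℝ × ℝ => ENNReal.ofReal (Real.exp (-(v * z.1)))
        * (ENNReal.ofReal (Real.exp (θ * z.2)) * ψ z.1 z.2) :=
      ((Real.measurable_exp.comp ((measurable_fst.const_mul v).neg)).ennreal_ofReal).mul
        (((Real.measurable_exp.comp (measurable_snd.const_mul θ)).ennreal_ofReal).mul hψ_meas)
    have h1 : ∀ x : ℝ, ENNReal.ofReal (Real.exp (-(v * x))) * N x
        = ∫⁻ t in Set.Ioi (0:ℝ), ENNReal.ofReal (Real.exp (-(v * x)))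
          * (ENNReal.ofReal (Real.exp (θ * t)) * ψ x t) :=
      fun x => (lintegral_const_mul' _ _ ENNReal.ofReal_ne_top).symm
    rw [lintegral_congr h1]
    rw [lintegral_lintegral_swap hmeas2.aemeasurable]
    have h2 : ∀ t ∈ Set.Ioi (0:ℝ),
        (∫⁻ x in Set.Ioi (0:ℝ), ENNReal.ofReal (Real.exp (-(v * x)))
          * (ENNReal.ofReal (Real.exp (θ * t)) * ψ x t))
          = ENNReal.ofReal (Real.exp (θ * t))
            * (ENNReal.ofReal (1/v) * ENNReal.ofReal (Real.exp (-(t * c)))) := by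
      intro t ht
      rw [← hXint t (le_of_lt ht)]
      rw [← lintegral_const_mul' _ _ ENNReal.ofReal_ne_top]
      refine lintegral_congr fun x => ?_
      ring
    rw [setLIntegral_congr_fun measurableSet_Ioi h2]
    have h3 : ∀ t ∈ Set.Ioi (0:ℝ), ENNReal.ofReal (Real.exp (θ * t))
        * (ENNReal.ofReal (1/v) * ENNReal.ofReal (Real.exp (-(t * c))))
        = ENNReal.ofReal (1/v) * ENNReal.ofReal (Real.exp (-((c - θ) * t))) := by
      intro t ht
      rw [mul_left_comm]
      congr 1
      rw [← ENNReal.ofReal_mul (Real.exp_pos _).le, ← Real.exp_add]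
      congr 2
      ring
    rw [setLIntegral_congr_fun measurableSet_Ioi h3]
    rw [lintegral_const_mul' _ _ ENNReal.ofReal_ne_top, exp_lint_Ioi 0 hcθ']
    norm_num
  -- final assembly
  have hWm : Measurable fun x : ℝ => ENNReal.ofReal (u * Real.exp (-(v * x))) * N x :=
    (((Real.measurable_exp.comp ((measurable_id.const_mul v).neg)).const_mul u).ennreal_ofReal).mul
      hN_meas
  have hW_fin : ∀ x : ℝ, ENNReal.ofReal (u * Real.exp (-(v * x))) * N x ≠ ⊤ :=
    fun x => ENNReal.mul_ne_top ENNReal.ofReal_ne_top (hN_fin x)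
  have hW_lint : ∫⁻ x in Set.Ioi (0:ℝ), ENNReal.ofReal (u * Real.exp (-(v * x))) * N x
      = ENNReal.ofReal u * (ENNReal.ofReal (1/v) * ENNReal.ofReal (1/(c-θ))) := by
    have h1 : ∀ x : ℝ, ENNReal.ofReal (u * Real.exp (-(v * x))) * N x
        = ENNReal.ofReal u * (ENNReal.ofReal (Real.exp (-(v * x))) * N x) := by
      intro x
      rw [ENNReal.ofReal_mul hu.le, mul_assoc]
    rw [lintegral_congr h1, lintegral_const_mul' _ _ ENNReal.ofReal_ne_top, hL]
  have hW_int : IntegrableOn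
      (fun x => (ENNReal.ofReal (u * Real.exp (-(v * x))) * N x).toReal) (Set.Ioi (0:ℝ)) := by
    refine integrable_toReal_of_lintegral_ne_top hWm.aemeasurable ?_
    rw [hW_lint]
    exact (ENNReal.mul_lt_top ENNReal.ofReal_lt_top
      (ENNReal.mul_lt_top ENNReal.ofReal_lt_top ENNReal.ofReal_lt_top)).ne
  have hW_integral : ∫ x in Set.Ioi (0:ℝ),
      (ENNReal.ofReal (u * Real.exp (-(v * x))) * N x).toReal
      = u * ((1/v) * (1/(c-θ))) := by
    rw [integral_toReal hWm.aemeasurable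
      (ae_of_all _ fun x => lt_top_iff_ne_top.mpr (hW_fin x))]
    rw [hW_lint, ENNReal.toReal_mul, ENNReal.toReal_mul, ENNReal.toReal_ofReal hu.le,
      ENNReal.toReal_ofReal (by positivity), ENNReal.toReal_ofReal (by positivity)]
  have hW_toReal : ∀ x : ℝ, (ENNReal.ofReal (u * Real.exp (-(v * x))) * N x).toReal
      = u * Real.exp (-(v * x)) * (N x).toReal := by
    intro x
    rw [ENNReal.toReal_mul, ENNReal.toReal_ofReal (by positivity)]
  have hev : IntegrableOn (fun x => u * Real.exp (-(v * x))) (Set.Ioi (0:ℝ)) := by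
    have := (exp_neg_integrableOn_Ioi 0 hv).const_mul u
    simpa [neg_mul, IntegrableOn] using this
  have heu : IntegrableOn (fun x => u * Real.exp (-(u * x))) (Set.Ioi (0:ℝ)) := by
    have := (exp_neg_integrableOn_Ioi 0 hu).const_mul u
    simpa [neg_mul, IntegrableOn] using this
  have hev_val : ∫ x in Set.Ioi (0:ℝ), u * Real.exp (-(v * x)) = u / v := by
    rw [integral_const_mul, exp_int_Ioi 0 hv]
    norm_num
    rw [div_eq_mul_inv]
  have heu_val : ∫ x in Set.Ioi (0:ℝ), u * Real.exp (-(u * x)) = 1 := by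
    rw [integral_const_mul, exp_int_Ioi 0 hu]
    field_simp
    simp
  have hmain : ∀ x : ℝ,
      u * Real.exp (-(u * x)) * (∫ ω, (Real.exp (θ * (S.Tp x ω - x / S.μ)) - 1))
      = θ * (ENNReal.ofReal (u * Real.exp (-(v * x))) * N x).toReal
        + (u * Real.exp (-(v * x)) - u * Real.exp (-(u * x))) := by
    intro x
    rw [(hInner x).2, hW_toReal x]
    have he : Real.exp (-(u * x)) * Real.exp (-(θ * (x / S.μ))) = Real.exp (-(v * x)) := by
      rw [← Real.exp_add]
      congr 1
      rw [hv_def]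
      field_simp
      ring
    rw [← he]
    ring
  calc (∫ x in Set.Ioi (0:ℝ), u * Real.exp (-(u * x))
        * ∫ ω, (Real.exp (θ * (S.Tp x ω - x / S.μ)) - 1))
      = ∫ x in Set.Ioi (0:ℝ), (θ * (ENNReal.ofReal (u * Real.exp (-(v * x))) * N x).toReal
          + (u * Real.exp (-(v * x)) - u * Real.exp (-(u * x)))) := by
        exact integral_congr_ae (ae_of_all _ fun x => hmain x)
    _ = θ * (u * ((1/v) * (1/(c-θ)))) + (u / v - 1) := by
        have hsub : IntegrableOn
            (fun x => u * Real.exp (-(v * x)) - u * Real.exp (-(u * x))) (Set.Ioi (0:ℝ)) :=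
          hev.sub heu
        rw [integral_add (hW_int.const_mul θ) hsub]
        rw [integral_const_mul, hW_integral]
        rw [integral_sub hev heu, hev_val, heu_val]
    _ = θ / (S.μ * u + θ) * (S.μ * u / (c - θ) - 1) := by
        have hμ0 : S.μ ≠ 0 := ne_of_gt hμ
        have hva : v = (S.μ * u + θ) / S.μ := by
          rw [hv_def]
          field_simp
        have ha : S.μ * u + θ ≠ 0 := ne_of_gt (by linarith)
        have hd : c - θ ≠ 0 := ne_of_gt hcθ'
        have ha' : u * S.μ + θ ≠ 0 := by rw [mul_comm]; exact ha
        rw [hva]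
        field_simp
        ring
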